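/- arXiv:2505.01302 — 2 statements merged into one kernel-verified Lean document; each statement's English description precedes it below -/
import Mathlib

section
/- Let P be a real symmetric positive semidefinite solution of the ARE and Ã = Ā − B̄B̄ᵀP. Then for h = [h₁; h₂] ∈ ℂ^{n+m} (with h₁ ∈ ℂⁿ, h₂ ∈ ℂ^m), Ãh = 0 holds if and only if (−L + aIₙ)h₁ + Bh₂ = 0 and Q(α)h₁ = 0. -/
open Matrix Filter Topology
open scoped ComplexOrder

private lemma star_shift {k k' : Type*} [Fintype k] [Fintype k']
    (M : Matrix k k' ℂ) (x : k → ℂ) (v : k' → ℂ) :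
    star x ⬝ᵥ (M *ᵥ v) = star (Mᴴ *ᵥ x) ⬝ᵥ v := by
  rw [star_mulVec, conjTranspose_conjTranspose, ← dotProduct_mulVec]

private lemma key_lemma {k l : Type*} [Fintype k] [Fintype l] [DecidableEq k] [DecidableEq l]
    (A P Q : Matrix k k ℂ) (Bb : Matrix k l ℂ)
    (hPh : P.IsHermitian) (hQ : Q.PosSemidef)
    (hare : Aᴴ * P + P * A - P * Bb * Bbᴴ * P + Q = 0)
    (x : k → ℂ) :
    (A - Bb * Bbᴴ * P) *ᵥ x = 0 ↔ (A *ᵥ x = 0 ∧ Q *ᵥ x = 0) := by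
  set w : l → ℂ := Bbᴴ *ᵥ (P *ᵥ x) with hw
  have hww : (0:ℂ) ≤ star w ⬝ᵥ w := by
    have := (Matrix.PosSemidef.one (R := ℂ) (n := l)).dotProduct_mulVec_nonneg w
    simpa using this
  have hscal : star x ⬝ᵥ ((Aᴴ * P + P * A - P * Bb * Bbᴴ * P + Q) *ᵥ x) = 0 := by
    rw [hare]; simp
  have hexp : star (A *ᵥ x) ⬝ᵥ (P *ᵥ x) + star (P *ᵥ x) ⬝ᵥ (A *ᵥ x)
      - star w ⬝ᵥ w + star x ⬝ᵥ (Q *ᵥ x) = 0 := by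
    have e1 : star x ⬝ᵥ ((Aᴴ * P) *ᵥ x) = star (A *ᵥ x) ⬝ᵥ (P *ᵥ x) := by
      rw [← mulVec_mulVec, star_shift, conjTranspose_conjTranspose]
    have e2 : star x ⬝ᵥ ((P * A) *ᵥ x) = star (P *ᵥ x) ⬝ᵥ (A *ᵥ x) := by
      rw [← mulVec_mulVec, star_shift, hPh.eq]
    have e3 : star x ⬝ᵥ ((P * Bb * Bbᴴ * P) *ᵥ x) = star w ⬝ᵥ w := by
      have h4 : P * Bb * Bbᴴ * P = P * (Bb * (Bbᴴ * P)) := by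
        rw [Matrix.mul_assoc, Matrix.mul_assoc]
      rw [h4, ← mulVec_mulVec, star_shift, hPh.eq, ← mulVec_mulVec, star_shift,
        ← mulVec_mulVec]
    calc star (A *ᵥ x) ⬝ᵥ (P *ᵥ x) + star (P *ᵥ x) ⬝ᵥ (A *ᵥ x)
        - star w ⬝ᵥ w + star x ⬝ᵥ (Q *ᵥ x)
        = star x ⬝ᵥ ((Aᴴ * P) *ᵥ x) + star x ⬝ᵥ ((P * A) *ᵥ x)
          - star x ⬝ᵥ ((P * Bb * Bbᴴ * P) *ᵥ x) + star x ⬝ᵥ (Q *ᵥ x) := by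
          rw [e1, e2, e3]
      _ = star x ⬝ᵥ ((Aᴴ * P + P * A - P * Bb * Bbᴴ * P + Q) *ᵥ x) := by
          simp [add_mulVec, sub_mulVec, dotProduct_add, dotProduct_sub]
      _ = 0 := hscal
  constructor
  · intro hz
    have hAx : A *ᵥ x = Bb *ᵥ w := by
      have h5 := sub_eq_zero.mp (by rwa [sub_mulVec] at hz)
      rw [h5, ← mulVec_mulVec, ← mulVec_mulVec, hw]
    have f1 : star (A *ᵥ x) ⬝ᵥ (P *ᵥ x) = star w ⬝ᵥ w := by
      conv_lhs => rw [hAx, ← conjTranspose_conjTranspose Bb]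
      rw [← star_shift, hw]
    have f2 : star (P *ᵥ x) ⬝ᵥ (A *ᵥ x) = star w ⬝ᵥ w := by
      rw [hAx, star_shift, ← hw]
    rw [f1, f2] at hexp
    have hsum : star w ⬝ᵥ w + star x ⬝ᵥ (Q *ᵥ x) = 0 := by
      have : star w ⬝ᵥ w + star w ⬝ᵥ w - star w ⬝ᵥ w = star w ⬝ᵥ w := by ring
      rwa [this] at hexp
    obtain ⟨hw0, hq0⟩ := (add_eq_zero_iff_of_nonneg hww (hQ.dotProduct_mulVec_nonneg x)).mp hsum
    have hwz : w = 0 := dotProduct_star_self_eq_zero.mp hw0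
    refine ⟨?_, (hQ.dotProduct_mulVec_zero_iff x).mp hq0⟩
    rw [hAx, hwz, mulVec_zero]
  · rintro ⟨hA0, hQ0⟩
    have : -(star w ⬝ᵥ w) = 0 := by
      rw [hA0, hQ0] at hexp
      simpa using hexp
    have hwz : w = 0 := dotProduct_star_self_eq_zero.mp (neg_eq_zero.mp this)
    rw [sub_mulVec, hA0, ← mulVec_mulVec, ← mulVec_mulVec, ← hw, hwz, mulVec_zero, sub_zero]


/-- `Q(α) = D + A¹(α) − A²(α)` where `A¹(α)` keeps adjacency entries with `α i = -α j`
and `A²(α)` keeps adjacency entries with `α i = α j`. -/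
noncomputable def Qmat {n : ℕ} (G : SimpleGraph (Fin n)) [DecidableRel G.Adj] (α : Fin n → ℝ) :
    Matrix (Fin n) (Fin n) ℝ :=
  G.degMatrix ℝ
    + Matrix.of (fun i j => if α i = -α j then G.adjMatrix ℝ i j else 0)
    - Matrix.of (fun i j => if α i = α j then G.adjMatrix ℝ i j else 0)

/-- A pair `(M, N)` with `M : k×k`, `N : k×l` is controllable if the controllability
matrix `[N, MN, …, M^{k−1}N]` has full rank `k`. -/
def Controllable {K L : Type*} [Fintype K] [Fintype L] [DecidableEq K]
    (M : Matrix K K ℝ) (N : Matrix K L ℝ) : Prop :=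
  (Matrix.of fun (i : K) (p : Fin (Fintype.card K) × L) => (M ^ (p.1 : ℕ) * N) i p.2).rank
    = Fintype.card K

/-- `(M, C)` is observable iff `(Mᵀ, Cᵀ)` is controllable. -/
def Observable {K L : Type*} [Fintype K] [Fintype L] [DecidableEq K] [DecidableEq L]
    (M : Matrix K K ℝ) (C : Matrix L K ℝ) : Prop :=
  Controllable Mᵀ Cᵀ

private lemma mapRC_mul {p q r : Type*} [Fintype q] (M : Matrix p q ℝ) (N : Matrix q r ℝ) :
    (M * N).map Complex.ofReal = M.map Complex.ofReal * N.map Complex.ofReal := by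
  ext i j
  simp only [Matrix.map_apply, Matrix.mul_apply]
  push_cast
  rfl

private lemma mapRC_add {p q : Type*} (M N : Matrix p q ℝ) :
    (M + N).map Complex.ofReal = M.map Complex.ofReal + N.map Complex.ofReal := by
  ext i j; simp

private lemma mapRC_sub {p q : Type*} (M N : Matrix p q ℝ) :
    (M - N).map Complex.ofReal = M.map Complex.ofReal - N.map Complex.ofReal := by
  ext i j; simp

private lemma mapRC_conjT {p q : Type*} (M : Matrix p q ℝ) :
    (Mᵀ).map Complex.ofReal = (M.map Complex.ofReal)ᴴ := by
  ext i j
  simp [Matrix.conjTranspose_apply, Complex.conj_ofReal]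

private lemma psd_map {k : Type*} [Fintype k] [DecidableEq k] {M : Matrix k k ℝ}
    (hM : M.PosSemidef) : (M.map Complex.ofReal).PosSemidef := by
  obtain ⟨C, hC⟩ : ∃ C : Matrix k k ℝ, M = Cᴴ * C := by
    open scoped MatrixOrder in
    obtain ⟨C, hC⟩ := CStarAlgebra.nonneg_iff_eq_star_mul_self.mp hM.nonneg
    exact ⟨C, by rw [hC, star_eq_conjTranspose]⟩
  have hC' : Cᴴ = Cᵀ := by
    ext i j; simp [Matrix.conjTranspose_apply]
  have : M.map Complex.ofReal = (C.map Complex.ofReal)ᴴ * (C.map Complex.ofReal) := by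
    rw [hC, hC', mapRC_mul, mapRC_conjT]
  rw [this]
  exact Matrix.posSemidef_conjTranspose_mul_self _

private lemma qmat_psd {n : ℕ} (G : SimpleGraph (Fin n)) [DecidableRel G.Adj]
    (α : Fin n → ℝ) (hα : ∀ i, α i = 1 ∨ α i = -1) : (Qmat G α).PosSemidef := by
  have hd : (Matrix.diagonal α)ᴴ = Matrix.diagonal α := by
    ext i j
    by_cases h : i = j <;> simp [Matrix.conjTranspose_apply, Matrix.diagonal_apply, h, eq_comm]
  have heq : Qmat G α = (Matrix.diagonal α)ᴴ * G.lapMatrix ℝ * Matrix.diagonal α := by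
    rw [hd]
    ext i j
    rw [Matrix.mul_diagonal, Matrix.diagonal_mul]
    simp only [Qmat, SimpleGraph.lapMatrix, Matrix.add_apply, Matrix.sub_apply, Matrix.of_apply]
    by_cases hij : i = j
    · subst hij
      rcases hα i with h1 | h1 <;>
        norm_num [h1, SimpleGraph.degMatrix, Matrix.diagonal_apply_eq]
    · have hd0 : SimpleGraph.degMatrix ℝ G i j = 0 := Matrix.diagonal_apply_ne _ hij
      rcases hα i with h1 | h1 <;> rcases hα j with h2 | h2 <;>
        rw [h1, h2] <;> norm_num [hd0] <;> split <;> norm_num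
  rw [heq]
  exact (SimpleGraph.posSemidef_lapMatrix ℝ G).conjTranspose_mul_mul_same _

private lemma psd_fromBlocks {k l : Type*} [Fintype k] [Fintype l] [DecidableEq k] [DecidableEq l]
    {M : Matrix k k ℂ} (hM : M.PosSemidef) :
    (Matrix.fromBlocks M 0 0 0 : Matrix (k ⊕ l) (k ⊕ l) ℂ).PosSemidef := by
  refine Matrix.PosSemidef.of_dotProduct_mulVec_nonneg ?_ ?_
  · show _ᴴ = _
    rw [Matrix.fromBlocks_conjTranspose, hM.1.eq]
    simp
  · intro x
    have h := hM.dotProduct_mulVec_nonneg (x ∘ Sum.inl)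
    rw [Matrix.fromBlocks_mulVec]
    simp only [Matrix.zero_mulVec, add_zero, zero_add]
    have he : star x ⬝ᵥ Sum.elim (M *ᵥ (x ∘ Sum.inl)) (0 : l → ℂ)
        = star (x ∘ Sum.inl) ⬝ᵥ (M *ᵥ (x ∘ Sum.inl)) := by
      simp [dotProduct, Fintype.sum_sum_type]
    rw [he]
    exact h

private lemma mapRC_zero {p q : Type*} :
    (0 : Matrix p q ℝ).map Complex.ofReal = 0 := by
  ext i j; simp

private lemma elim_zero_iff {k l : Type*} (u : k → ℂ) :
    Sum.elim u (0 : l → ℂ) = (0 : k ⊕ l → ℂ) ↔ u = 0 := by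
  constructor
  · intro h; funext i; exact congrFun h (Sum.inl i)
  · rintro rfl; funext i; cases i <;> rfl

/-- For a symmetric PSD solution `P` of the ARE and `Ã = Ā − B̄B̄ᵀP`: for
`h = [h₁; h₂] ∈ ℂ^{n+m}`, `Ãh = 0` holds iff `(−L + aIₙ)h₁ + Bh₂ = 0` and `Q(α)h₁ = 0`. -/
theorem closedLoop_kernel_characterization {n m : ℕ} (hn : 0 < n)
    (G : SimpleGraph (Fin n)) [DecidableRel G.Adj]
    (α : Fin n → ℝ) (hα : ∀ i, α i = 1 ∨ α i = -1) (a : ℝ)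
    (ι : Fin m → Fin n) (hι : StrictMono ι)
    (B : Matrix (Fin n) (Fin m) ℝ) (hB : B = Matrix.of fun i j => if i = ι j then 1 else 0)
    (Abar : Matrix (Fin n ⊕ Fin m) (Fin n ⊕ Fin m) ℝ)
    (hAbar : Abar = Matrix.fromBlocks
      (-(G.lapMatrix ℝ) + a • (1 : Matrix (Fin n) (Fin n) ℝ)) B 0 0)
    (Bbar : Matrix (Fin n ⊕ Fin m) (Fin m) ℝ)
    (hBbar : Bbar = Matrix.fromRows (0 : Matrix (Fin n) (Fin m) ℝ) (1 : Matrix (Fin m) (Fin m) ℝ))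
    (Qbar : Matrix (Fin n ⊕ Fin m) (Fin n ⊕ Fin m) ℝ)
    (hQbar : Qbar = Matrix.fromBlocks (Qmat G α) 0 0 0)
    (P : Matrix (Fin n ⊕ Fin m) (Fin n ⊕ Fin m) ℝ) (hP : P.PosSemidef)
    (hare : Abarᵀ * P + P * Abar - P * Bbar * Bbarᵀ * P + Qbar = 0)
    (Atil : Matrix (Fin n ⊕ Fin m) (Fin n ⊕ Fin m) ℝ)
    (hAtil : Atil = Abar - Bbar * Bbarᵀ * P)
    (h₁ : Fin n → ℂ) (h₂ : Fin m → ℂ) :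
    Atil.map (Complex.ofReal) *ᵥ Sum.elim h₁ h₂ = 0 ↔
      ((-(G.lapMatrix ℝ) + a • (1 : Matrix (Fin n) (Fin n) ℝ)).map (Complex.ofReal) *ᵥ h₁
          + B.map (Complex.ofReal) *ᵥ h₂ = 0
        ∧ (Qmat G α).map (Complex.ofReal) *ᵥ h₁ = 0) := by
  have hPh : (P.map Complex.ofReal).IsHermitian := by
    have hPt : Pᵀ = P := by
      ext i j
      have h := congrFun (congrFun hP.1 i) j
      simpa [Matrix.conjTranspose_apply] using h
    show _ᴴ = _
    rw [← mapRC_conjT, hPt]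
  have hQ' : (Qbar.map Complex.ofReal).PosSemidef := by
    rw [hQbar]
    have he : (Matrix.fromBlocks (Qmat G α) 0 0 0 :
          Matrix (Fin n ⊕ Fin m) (Fin n ⊕ Fin m) ℝ).map Complex.ofReal
        = (Matrix.fromBlocks ((Qmat G α).map Complex.ofReal) 0 0 0 :
          Matrix (Fin n ⊕ Fin m) (Fin n ⊕ Fin m) ℂ) := by
      rw [Matrix.fromBlocks_map]
      simp only [mapRC_zero]
    rw [he]
    exact psd_fromBlocks (psd_map (qmat_psd G α hα))
  have hareC : (Abar.map Complex.ofReal)ᴴ * P.map Complex.ofReal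
      + P.map Complex.ofReal * Abar.map Complex.ofReal
      - P.map Complex.ofReal * Bbar.map Complex.ofReal * (Bbar.map Complex.ofReal)ᴴ
          * P.map Complex.ofReal
      + Qbar.map Complex.ofReal = 0 := by
    have h0 := congrArg (fun M => Matrix.map M Complex.ofReal) hare
    simp only [mapRC_add, mapRC_sub, mapRC_mul, mapRC_conjT, mapRC_zero] at h0
    exact h0
  have hAtilC : Atil.map Complex.ofReal
      = Abar.map Complex.ofReal
        - Bbar.map Complex.ofReal * (Bbar.map Complex.ofReal)ᴴ * P.map Complex.ofReal := by
    rw [hAtil]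
    simp only [mapRC_sub, mapRC_mul, mapRC_conjT]
  rw [hAtilC, key_lemma (Abar.map Complex.ofReal) (P.map Complex.ofReal)
    (Qbar.map Complex.ofReal) (Bbar.map Complex.ofReal) hPh hQ' hareC (Sum.elim h₁ h₂)]
  have hAmap : Abar.map Complex.ofReal
      = Matrix.fromBlocks
          ((-(G.lapMatrix ℝ) + a • (1 : Matrix (Fin n) (Fin n) ℝ)).map Complex.ofReal)
          (B.map Complex.ofReal) (0 : Matrix (Fin m) (Fin n) ℂ) (0 : Matrix (Fin m) (Fin m) ℂ) := by
    rw [hAbar, Matrix.fromBlocks_map]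
    simp only [mapRC_zero]
  have hQmap : Qbar.map Complex.ofReal
      = Matrix.fromBlocks ((Qmat G α).map Complex.ofReal) (0 : Matrix (Fin n) (Fin m) ℂ)
          (0 : Matrix (Fin m) (Fin n) ℂ) (0 : Matrix (Fin m) (Fin m) ℂ) := by
    rw [hQbar, Matrix.fromBlocks_map]
    simp only [mapRC_zero]
  constructor
  · rintro ⟨hA0, hQ0⟩
    rw [hAmap, Matrix.fromBlocks_mulVec] at hA0
    rw [hQmap, Matrix.fromBlocks_mulVec] at hQ0
    simp only [Sum.elim_comp_inl, Sum.elim_comp_inr, Matrix.zero_mulVec, add_zero,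
      zero_add] at hA0 hQ0
    exact ⟨(elim_zero_iff _).mp hA0, by simpa using (elim_zero_iff _).mp hQ0⟩
  · rintro ⟨hc1, hc2⟩
    constructor
    · rw [hAmap, Matrix.fromBlocks_mulVec]
      simp only [Sum.elim_comp_inl, Sum.elim_comp_inr, Matrix.zero_mulVec, add_zero, zero_add]
      rw [elim_zero_iff]
      exact hc1
    · rw [hQmap, Matrix.fromBlocks_mulVec]
      simp only [Sum.elim_comp_inl, Sum.elim_comp_inr, Matrix.zero_mulVec, add_zero, zero_add]
      rw [elim_zero_iff]
      simpa using hc2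
end

section
/- Assume Assumptions A1, A2 and A3 hold, and let P be a real symmetric positive semidefinite solution of the ARE with Ã = Ā − B̄B̄ᵀP. Then the kernel of Ã is the one-dimensional subspace spanned by ψ₁ = [x*; u*], and 0 is an algebraically simple eigenvalue of Ã: there is no vector ĥ ∈ ℂ^{n+m} with Ãĥ = h for a nonzero h satisfying Ãh = 0 (equivalently, the generalized eigenspace of Ã for the eigenvalue 0 is one-dimensional). -/
open Matrix Filter Topology

/- ### Auxiliary lemmas -/

lemma aux_Qmat_eq {n : ℕ} (G : SimpleGraph (Fin n)) [DecidableRel G.Adj] (α : Fin n → ℝ)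
    (hα : ∀ i, α i = 1 ∨ α i = -1) :
    Qmat G α = Matrix.diagonal α * G.lapMatrix ℝ * Matrix.diagonal α := by
  ext i j
  rw [Matrix.mul_diagonal, Matrix.diagonal_mul]
  simp only [Qmat, SimpleGraph.lapMatrix, Matrix.sub_apply, Matrix.add_apply, Matrix.of_apply,
    SimpleGraph.degMatrix]
  rcases hα i with hi | hi <;> rcases hα j with hj | hj <;>
    by_cases hij : i = j <;>
    simp [hi, hj, hij, Matrix.diagonal_apply] <;> norm_num <;> split <;> ring

lemma aux_ker_fact {n : ℕ} (G : SimpleGraph (Fin n)) [DecidableRel G.Adj] (hG : G.Connected)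
    (hn : 0 < n) (α : Fin n → ℝ) (hα : ∀ i, α i = 1 ∨ α i = -1) (x : Fin n → ℝ)
    (hx : (Matrix.diagonal α * G.lapMatrix ℝ * Matrix.diagonal α) *ᵥ x = 0) :
    ∃ c : ℝ, x = c • α := by
  have hα2 : ∀ i, α i * α i = 1 := by
    intro i; rcases hα i with h | h <;> rw [h] <;> norm_num
  have hαne : ∀ i, α i ≠ 0 := by
    intro i; rcases hα i with h | h <;> rw [h] <;> norm_num
  have hd : ∀ (y : Fin n → ℝ), Matrix.diagonal α *ᵥ y = fun i => α i * y i := by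
    intro y; funext i; simp [Matrix.mulVec_diagonal]
  rw [← Matrix.mulVec_mulVec, ← Matrix.mulVec_mulVec, hd, hd] at hx
  have hL : G.lapMatrix ℝ *ᵥ (fun i => α i * x i) = 0 := by
    funext i
    have h2 := congrFun hx i
    simp only [Pi.zero_apply] at h2 ⊢
    rcases mul_eq_zero.mp h2 with h | h
    · exact absurd h (hαne i)
    · exact h
  have hR := (G.lapMatrix_mulVec_eq_zero_iff_forall_reachable
      (x := fun i => α i * x i)).mp (by exact hL)
  set i0 : Fin n := ⟨0, hn⟩
  refine ⟨α i0 * x i0, funext fun i => ?_⟩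
  have hcon := hR i0 i (hG.preconnected i0 i)
  have : α i * (α i * x i) = α i * (α i0 * x i0) := by rw [← hcon]
  rw [← mul_assoc, hα2 i, one_mul] at this
  simpa [mul_comm] using this

lemma aux_ker_fact' {n : ℕ} (G : SimpleGraph (Fin n)) [DecidableRel G.Adj]
    (α : Fin n → ℝ) (hα2 : ∀ i, α i * α i = 1) (c : ℝ) :
    (Matrix.diagonal α * G.lapMatrix ℝ * Matrix.diagonal α) *ᵥ (c • α) = 0 := by
  rw [← Matrix.mulVec_mulVec, ← Matrix.mulVec_mulVec]
  have h1 : Matrix.diagonal α *ᵥ (c • α) = fun _ => c := by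
    funext i
    simp only [Matrix.mulVec_diagonal, Pi.smul_apply, smul_eq_mul]
    rw [mul_left_comm, hα2 i, mul_one]
  rw [h1]
  have h2 : (fun _ : Fin n => c) = c • (fun _ : Fin n => (1:ℝ)) := by funext i; simp
  rw [h2, Matrix.mulVec_smul, G.lapMatrix_mulVec_const_eq_zero, smul_zero, Matrix.mulVec_zero]

lemma aux_obs_kill {n : ℕ} (M Q : Matrix (Fin n) (Fin n) ℝ)
    (hobs : (Matrix.of fun (i : Fin n) (p : Fin (Fintype.card (Fin n)) × Fin n) =>
      ((Mᵀ) ^ (p.1 : ℕ) * Qᵀ) i p.2).rank = Fintype.card (Fin n))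
    (x : Fin n → ℝ) (hQ : Q *ᵥ x = 0) (hM : M *ᵥ x = 0) : x = 0 := by
  set O : Matrix (Fin n) (Fin (Fintype.card (Fin n)) × Fin n) ℝ :=
    Matrix.of fun i p => ((Mᵀ) ^ (p.1 : ℕ) * Qᵀ) i p.2 with hO
  have hOx : Oᵀ *ᵥ x = 0 := by
    funext p
    obtain ⟨k, j⟩ := p
    have hpow : ∀ k : ℕ, Q *ᵥ (M ^ k *ᵥ x) = 0 := by
      intro k
      cases k with
      | zero => simpa using hQ
      | succ k =>
          rw [pow_succ, ← Matrix.mulVec_mulVec, hM, Matrix.mulVec_zero, Matrix.mulVec_zero]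
    have heq : (Oᵀ *ᵥ x) (k, j) = ((Q * M ^ (k:ℕ)) *ᵥ x) j := by
      simp only [Matrix.mulVec, dotProduct, Matrix.transpose_apply, hO, Matrix.of_apply]
      have : ∀ i, (Mᵀ ^ (k:ℕ) * Qᵀ) i j = (Q * M ^ (k:ℕ)) j i := by
        intro i
        rw [← Matrix.transpose_pow, ← Matrix.transpose_mul, Matrix.transpose_apply]
      simp_rw [this]
    rw [heq, ← Matrix.mulVec_mulVec, hpow]
    rfl
  have hrt : (Oᵀ).rank = Fintype.card (Fin n) := by rw [Matrix.rank_transpose]; exact hobs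
  have hker := LinearMap.finrank_range_add_finrank_ker (Oᵀ).mulVecLin
  rw [← Matrix.rank, hrt] at hker
  simp only [Module.finrank_fintype_fun_eq_card] at hker
  have hker0 : Module.finrank ℝ (LinearMap.ker (Oᵀ).mulVecLin) = 0 := by omega
  have hbot := Submodule.finrank_eq_zero.mp hker0
  have hxmem : x ∈ LinearMap.ker (Oᵀ).mulVecLin := by
    rw [LinearMap.mem_ker, Matrix.mulVecLin_apply]; exact hOx
  rw [hbot] at hxmem
  simpa using hxmem

lemma aux_B_inj {n m : ℕ} (ι : Fin m → Fin n) (hι : Function.Injective ι)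
    (v : Fin m → ℝ)
    (hv : (Matrix.of fun i j => if i = ι j then (1:ℝ) else 0) *ᵥ v = 0) : v = 0 := by
  funext j
  have h := congrFun hv (ι j)
  simp only [Matrix.mulVec, dotProduct, Matrix.of_apply, Pi.zero_apply] at h
  rw [Finset.sum_eq_single j] at h
  · simpa using h
  · intro k _ hk
    rw [if_neg (fun hkk => hk (hι hkk.symm)), zero_mul]
  · intro hj; exact absurd (Finset.mem_univ j) hj

lemma aux_dotT {k : Type*} [Fintype k] (A : Matrix k k ℝ) (x y : k → ℝ) :
    x ⬝ᵥ (Aᵀ *ᵥ y) = (A *ᵥ x) ⬝ᵥ y := by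
  rw [Matrix.dotProduct_mulVec, Matrix.vecMul_transpose]

lemma aux_dotT' {k : Type*} [Fintype k] (A : Matrix k k ℝ) (x y : k → ℝ) :
    x ⬝ᵥ (A *ᵥ y) = (Aᵀ *ᵥ x) ⬝ᵥ y := by
  conv_lhs => rw [← Matrix.transpose_transpose A]
  rw [aux_dotT]

lemma aux_dot_self_nonneg {k : Type*} [Fintype k] (v : k → ℝ) : 0 ≤ v ⬝ᵥ v :=
  Finset.sum_nonneg fun i _ => mul_self_nonneg _

/-- Under Assumptions A1–A3, for a symmetric PSD solution `P` of the ARE and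
`Ã = Ā − B̄B̄ᵀP`: the kernel of `Ã` is the one-dimensional subspace spanned by
`ψ₁ = [x*; u*]`, and `0` is an algebraically simple eigenvalue of `Ã`: there is no
`ĥ ∈ ℂ^{n+m}` with `Ãĥ = h` for a nonzero `h` with `Ãh = 0`. -/
theorem closedLoop_simple_zero_eigenvalue {n m : ℕ} (hn : 0 < n)
    (G : SimpleGraph (Fin n)) [DecidableRel G.Adj]
    (α : Fin n → ℝ) (hα : ∀ i, α i = 1 ∨ α i = -1)
    (p₀ : ℝ) (hp₀ : 0 < p₀) (a : ℝ)
    (ι : Fin m → Fin n) (hι : StrictMono ι)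
    (B : Matrix (Fin n) (Fin m) ℝ) (hB : B = Matrix.of fun i j => if i = ι j then 1 else 0)
    -- Assumption A1
    (hA1 : G.Connected)
    -- Assumption A2 with the witnesses `x* ∈ S(α)` and `u*` given explicitly
    (xs : Fin n → ℝ) (us : Fin m → ℝ)
    (hxs : Qmat G α *ᵥ xs = 0 ∧ p₀ * Real.sqrt n ≤ Real.sqrt (∑ i, xs i ^ 2))
    (hA2 : (-(G.lapMatrix ℝ) + a • (1 : Matrix (Fin n) (Fin n) ℝ)) *ᵥ xs + B *ᵥ us = 0)
    -- Assumption A3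
    (hA3c : Controllable (-(G.lapMatrix ℝ) + a • (1 : Matrix (Fin n) (Fin n) ℝ)) B)
    (hA3o : Observable (-(G.lapMatrix ℝ) + a • (1 : Matrix (Fin n) (Fin n) ℝ)) (Qmat G α))
    (Abar : Matrix (Fin n ⊕ Fin m) (Fin n ⊕ Fin m) ℝ)
    (hAbar : Abar = Matrix.fromBlocks
      (-(G.lapMatrix ℝ) + a • (1 : Matrix (Fin n) (Fin n) ℝ)) B 0 0)
    (Bbar : Matrix (Fin n ⊕ Fin m) (Fin m) ℝ)
    (hBbar : Bbar = Matrix.fromRows (0 : Matrix (Fin n) (Fin m) ℝ) (1 : Matrix (Fin m) (Fin m) ℝ))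
    (Qbar : Matrix (Fin n ⊕ Fin m) (Fin n ⊕ Fin m) ℝ)
    (hQbar : Qbar = Matrix.fromBlocks (Qmat G α) 0 0 0)
    (P : Matrix (Fin n ⊕ Fin m) (Fin n ⊕ Fin m) ℝ) (hP : P.PosSemidef)
    (hare : Abarᵀ * P + P * Abar - P * Bbar * Bbarᵀ * P + Qbar = 0)
    (Atil : Matrix (Fin n ⊕ Fin m) (Fin n ⊕ Fin m) ℝ)
    (hAtil : Atil = Abar - Bbar * Bbarᵀ * P) :
    (∀ h : Fin n ⊕ Fin m → ℝ, Atil *ᵥ h = 0 ↔ ∃ c : ℝ, h = c • Sum.elim xs us) ∧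
    ¬ ∃ (h hhat : Fin n ⊕ Fin m → ℂ), h ≠ 0 ∧
        Atil.map (Complex.ofReal) *ᵥ h = 0 ∧ Atil.map (Complex.ofReal) *ᵥ hhat = h := by
  obtain ⟨hQxs, hnorm⟩ := hxs
  set M : Matrix (Fin n) (Fin n) ℝ := -(G.lapMatrix ℝ) + a • 1 with hM
  set ψ : Fin n ⊕ Fin m → ℝ := Sum.elim xs us with hψdef
  have hα2 : ∀ i, α i * α i = 1 := by
    intro i; rcases hα i with h | h <;> rw [h] <;> norm_num
  have hQf : Qmat G α = Matrix.diagonal α * G.lapMatrix ℝ * Matrix.diagonal α :=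
    aux_Qmat_eq G α hα
  -- xs ≠ 0
  have hxs_ne : xs ≠ 0 := by
    intro h0
    rw [h0] at hnorm
    simp only [Pi.zero_apply, ne_eq, OfNat.ofNat_ne_zero, not_false_eq_true, zero_pow,
      Finset.sum_const_zero, Real.sqrt_zero] at hnorm
    have h1 : 0 < p₀ * Real.sqrt n :=
      mul_pos hp₀ (Real.sqrt_pos.mpr (by exact_mod_cast hn))
    linarith
  -- xs = c₀ • α
  obtain ⟨c₀, hc₀⟩ := aux_ker_fact G hA1 hn α hα xs (by rw [← hQf]; exact hQxs)
  have hc₀ne : c₀ ≠ 0 := by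
    intro h; apply hxs_ne; rw [hc₀, h, zero_smul]
  -- kernel of Q = span xs
  have hQker : ∀ x : Fin n → ℝ, Qmat G α *ᵥ x = 0 → ∃ t : ℝ, x = t • xs := by
    intro x hx
    obtain ⟨c, hc⟩ := aux_ker_fact G hA1 hn α hα x (by rw [← hQf]; exact hx)
    refine ⟨c / c₀, ?_⟩
    rw [hc, hc₀, smul_smul, div_mul_cancel₀ _ hc₀ne]
  -- Q is PSD
  have hQpsd : (Qmat G α).PosSemidef := by
    rw [hQf]
    have hlap := (SimpleGraph.posSemidef_lapMatrix ℝ G)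
    have h2 := hlap.conjTranspose_mul_mul_same (B := Matrix.diagonal α)
    simpa [Matrix.diagonal_conjTranspose] using h2
  have hQzero : ∀ y : Fin n → ℝ, y ⬝ᵥ (Qmat G α *ᵥ y) = 0 → Qmat G α *ᵥ y = 0 := by
    intro y hy
    exact (hQpsd.dotProduct_mulVec_zero_iff y).mp (by simpa using hy)
  have hQnonneg : ∀ y : Fin n → ℝ, 0 ≤ y ⬝ᵥ (Qmat G α *ᵥ y) := by
    intro y; simpa using hQpsd.dotProduct_mulVec_nonneg y
  have hPzero : ∀ y : Fin n ⊕ Fin m → ℝ, y ⬝ᵥ (P *ᵥ y) = 0 → P *ᵥ y = 0 := by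
    intro y hy
    exact (hP.dotProduct_mulVec_zero_iff y).mp (by simpa using hy)
  -- P symmetric
  have hPsym : Pᵀ = P := by
    have h := hP.1
    ext i j
    have := congrFun (congrFun h i) j
    simpa [Matrix.conjTranspose_apply] using this
  -- Bbar structure
  have hBt : ∀ y : Fin n ⊕ Fin m → ℝ, Bbarᵀ *ᵥ y = y ∘ Sum.inr := by
    intro y; funext j
    simp [hBbar, Matrix.mulVec, dotProduct, Fintype.sum_sum_type,
      Matrix.one_apply, Finset.sum_ite_eq]
  have hBv : ∀ w : Fin m → ℝ, Bbar *ᵥ w = Sum.elim (0 : Fin n → ℝ) w := by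
    intro w; funext j
    cases j with
    | inl j => simp [hBbar, Matrix.mulVec, dotProduct]
    | inr j => simp [hBbar, Matrix.mulVec, dotProduct, Matrix.one_apply,
        Finset.sum_ite_eq]
  have hBB : ∀ y : Fin n ⊕ Fin m → ℝ, (Bbar * Bbarᵀ) *ᵥ y = Sum.elim (0 : Fin n → ℝ) (y ∘ Sum.inr) := by
    intro y; rw [← Matrix.mulVec_mulVec, hBt, hBv]
  -- rearranged ARE
  have hare2 : Atilᵀ * P + P * Atil + P * (Bbar * Bbarᵀ) * P + Qbar = 0 := by
    have htr : Atilᵀ = Abarᵀ - P * (Bbar * Bbarᵀ) := by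
      rw [hAtil, Matrix.transpose_sub, Matrix.transpose_mul, Matrix.transpose_mul,
        Matrix.transpose_transpose, hPsym]
    rw [htr, hAtil]
    have expand : (Abarᵀ - P * (Bbar * Bbarᵀ)) * P + P * (Abar - Bbar * Bbarᵀ * P)
        + P * (Bbar * Bbarᵀ) * P + Qbar
        = Abarᵀ * P + P * Abar - P * Bbar * Bbarᵀ * P + Qbar := by
      simp only [Matrix.sub_mul, Matrix.mul_sub, Matrix.mul_assoc]
      abel
    rw [expand]; exact hare
  -- the key quadratic identity
  have key : ∀ v : Fin n ⊕ Fin m → ℝ,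
      2 * ((Atil *ᵥ v) ⬝ᵥ (P *ᵥ v))
        + ((P *ᵥ v) ∘ Sum.inr) ⬝ᵥ ((P *ᵥ v) ∘ Sum.inr)
        + (v ∘ Sum.inl) ⬝ᵥ (Qmat G α *ᵥ (v ∘ Sum.inl)) = 0 := by
    intro v
    have h0 : v ⬝ᵥ ((Atilᵀ * P + P * Atil + P * (Bbar * Bbarᵀ) * P + Qbar) *ᵥ v) = 0 := by
      rw [hare2]; simp
    rw [Matrix.add_mulVec, Matrix.add_mulVec, Matrix.add_mulVec, dotProduct_add,
      dotProduct_add, dotProduct_add] at h0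
    have e1 : v ⬝ᵥ ((Atilᵀ * P) *ᵥ v) = (Atil *ᵥ v) ⬝ᵥ (P *ᵥ v) := by
      rw [← Matrix.mulVec_mulVec, aux_dotT]
    have e2 : v ⬝ᵥ ((P * Atil) *ᵥ v) = (Atil *ᵥ v) ⬝ᵥ (P *ᵥ v) := by
      rw [← Matrix.mulVec_mulVec, aux_dotT', hPsym, dotProduct_comm]
    have e3 : v ⬝ᵥ ((P * (Bbar * Bbarᵀ) * P) *ᵥ v)
        = ((P *ᵥ v) ∘ Sum.inr) ⬝ᵥ ((P *ᵥ v) ∘ Sum.inr) := by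
      rw [← Matrix.mulVec_mulVec, ← Matrix.mulVec_mulVec, hBB, aux_dotT', hPsym]
      conv_lhs => rw [← Sum.elim_comp_inl_inr (P *ᵥ v)]
      rw [sumElim_dotProduct_sumElim, dotProduct_zero, zero_add]
      simp
    have e4 : v ⬝ᵥ (Qbar *ᵥ v) = (v ∘ Sum.inl) ⬝ᵥ (Qmat G α *ᵥ (v ∘ Sum.inl)) := by
      rw [hQbar, Matrix.fromBlocks_mulVec]
      conv_lhs => rw [← Sum.elim_comp_inl_inr v]
      rw [sumElim_dotProduct_sumElim]
      simp
    rw [e1, e2, e3, e4] at h0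
    linarith
  -- Atil action decomposition
  have hAtil_eq : ∀ v : Fin n ⊕ Fin m → ℝ,
      Atil *ᵥ v = Abar *ᵥ v - Sum.elim (0 : Fin n → ℝ) ((P *ᵥ v) ∘ Sum.inr) := by
    intro v
    rw [hAtil, Matrix.sub_mulVec, ← Matrix.mulVec_mulVec, hBB]
  -- Abar ψ = 0
  have hAbarψ : Abar *ᵥ ψ = 0 := by
    rw [hAbar, Matrix.fromBlocks_mulVec]
    funext j
    cases j with
    | inl j =>
        have : (ψ ∘ Sum.inl) = xs := rfl
        have h2 : (ψ ∘ Sum.inr) = us := rfl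
        rw [Sum.elim_inl, this, h2]
        exact congrFun hA2 j
    | inr j => simp
  -- Atil ψ = 0 and bottom of P ψ = 0
  have hψtil : Atil *ᵥ ψ = -Sum.elim (0 : Fin n → ℝ) ((P *ᵥ ψ) ∘ Sum.inr) := by
    rw [hAtil_eq, hAbarψ, zero_sub]
  have hwψ : (P *ᵥ ψ) ∘ Sum.inr = 0 := by
    have hkψ := key ψ
    rw [hψtil] at hkψ
    have hdot : (-Sum.elim (0 : Fin n → ℝ) ((P *ᵥ ψ) ∘ Sum.inr)) ⬝ᵥ (P *ᵥ ψ)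
        = -(((P *ᵥ ψ) ∘ Sum.inr) ⬝ᵥ ((P *ᵥ ψ) ∘ Sum.inr)) := by
      rw [neg_dotProduct, neg_inj]
      conv_lhs => rw [← Sum.elim_comp_inl_inr (P *ᵥ ψ)]
      rw [sumElim_dotProduct_sumElim, zero_dotProduct, zero_add]
      simp
    rw [hdot] at hkψ
    have hq0 : (ψ ∘ Sum.inl) ⬝ᵥ (Qmat G α *ᵥ (ψ ∘ Sum.inl)) = 0 := by
      have : (ψ ∘ Sum.inl) = xs := rfl
      rw [this, hQxs, dotProduct_zero]
    rw [hq0] at hkψ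
    exact dotProduct_self_eq_zero.mp (by linarith)
  have hψker : Atil *ᵥ ψ = 0 := by
    rw [hψtil, hwψ]
    funext j; cases j <;> simp
  -- Atilᵀ (P ψ) = 0
  have hAtP : Atilᵀ *ᵥ (P *ᵥ ψ) = 0 := by
    have h0 : (Atilᵀ * P + P * Atil + P * (Bbar * Bbarᵀ) * P + Qbar) *ᵥ ψ = 0 := by
      rw [hare2]; simp
    rw [Matrix.add_mulVec, Matrix.add_mulVec, Matrix.add_mulVec] at h0
    have e1 : (P * Atil) *ᵥ ψ = 0 := by
      rw [← Matrix.mulVec_mulVec, hψker, Matrix.mulVec_zero]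
    have e2 : (P * (Bbar * Bbarᵀ) * P) *ᵥ ψ = 0 := by
      rw [← Matrix.mulVec_mulVec, ← Matrix.mulVec_mulVec, hBB, hwψ]
      have : Sum.elim (0 : Fin n → ℝ) (0 : Fin m → ℝ) = 0 := by
        funext j; cases j <;> simp
      rw [this, Matrix.mulVec_zero]
    have e3 : Qbar *ᵥ ψ = 0 := by
      rw [hQbar, Matrix.fromBlocks_mulVec]
      have : (ψ ∘ Sum.inl) = xs := rfl
      funext j; cases j <;> simp [this, hQxs]
    rw [e1, e2, e3, add_zero, add_zero, add_zero, ← Matrix.mulVec_mulVec] at h0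
    exact h0
  -- Part 1
  have part1 : ∀ h : Fin n ⊕ Fin m → ℝ, Atil *ᵥ h = 0 ↔ ∃ c : ℝ, h = c • ψ := by
    intro h
    constructor
    · intro hker
      have hkey := key h
      rw [hker, zero_dotProduct, mul_zero, zero_add] at hkey
      have hge1 := aux_dot_self_nonneg ((P *ᵥ h) ∘ Sum.inr)
      have hge2 := hQnonneg (h ∘ Sum.inl)
      have hwz : (P *ᵥ h) ∘ Sum.inr = 0 :=
        dotProduct_self_eq_zero.mp (by linarith)
      have hQh : Qmat G α *ᵥ (h ∘ Sum.inl) = 0 := hQzero _ (by linarith)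
      have hAbarh : Abar *ᵥ h = 0 := by
        have h1 := hAtil_eq h
        rw [hker, hwz] at h1
        have h2 : Sum.elim (0 : Fin n → ℝ) (0 : Fin m → ℝ) = 0 := by
          funext j; cases j <;> simp
        rw [h2, sub_zero] at h1
        exact h1.symm
      obtain ⟨t, ht⟩ := hQker _ hQh
      have htop : M *ᵥ (h ∘ Sum.inl) + B *ᵥ (h ∘ Sum.inr) = 0 := by
        rw [hAbar, Matrix.fromBlocks_mulVec] at hAbarh
        funext i
        simpa using congrFun hAbarh (Sum.inl i)
      have hMxs2 : M *ᵥ xs = -(B *ᵥ us) := by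
        rw [eq_neg_iff_add_eq_zero]
        exact hA2
      have hBu : B *ᵥ (h ∘ Sum.inr - t • us) = 0 := by
        rw [Matrix.mulVec_sub, Matrix.mulVec_smul]
        have h1 : M *ᵥ (h ∘ Sum.inl) = t • (M *ᵥ xs) := by rw [ht, Matrix.mulVec_smul]
        rw [h1, hMxs2, smul_neg] at htop
        have h2 : B *ᵥ (h ∘ Sum.inr) = t • (B *ᵥ us) := by
          rw [neg_add_eq_zero] at htop
          exact htop.symm
        rw [h2, sub_self]
      rw [hB] at hBu
      have hu := aux_B_inj ι hι.injective _ hBu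
      refine ⟨t, ?_⟩
      funext j
      cases j with
      | inl i =>
          have := congrFun ht i
          simpa [hψdef] using this
      | inr i =>
          have h3 := congrFun hu i
          have h4 : h (Sum.inr i) = t * us i := by
            have : h (Sum.inr i) - t * us i = 0 := by simpa using h3
            linarith
          simpa [hψdef] using h4
    · rintro ⟨c, rfl⟩
      rw [Matrix.mulVec_smul, hψker, smul_zero]
  refine ⟨part1, ?_⟩
  rintro ⟨h, hhat, hne, h0, h1⟩
  have hre : ∀ w : Fin n ⊕ Fin m → ℂ,
      (fun j => ((Atil.map Complex.ofReal *ᵥ w) j).re) = Atil *ᵥ (fun k => (w k).re) := by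
    intro w; funext j
    simp only [Matrix.mulVec, dotProduct, Matrix.map_apply]
    rw [Complex.re_sum]
    exact Finset.sum_congr rfl fun k _ => Complex.re_ofReal_mul _ _
  have him : ∀ w : Fin n ⊕ Fin m → ℂ,
      (fun j => ((Atil.map Complex.ofReal *ᵥ w) j).im) = Atil *ᵥ (fun k => (w k).im) := by
    intro w; funext j
    simp only [Matrix.mulVec, dotProduct, Matrix.map_apply]
    rw [Complex.im_sum]
    exact Finset.sum_congr rfl fun k _ => Complex.im_ofReal_mul _ _
  have h0re : Atil *ᵥ (fun k => (h k).re) = 0 := by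
    have h2 := hre h; rw [h0] at h2
    simpa [Pi.zero_def] using h2.symm
  have h0im : Atil *ᵥ (fun k => (h k).im) = 0 := by
    have h2 := him h; rw [h0] at h2
    simpa [Pi.zero_def] using h2.symm
  obtain ⟨c₁, hc1⟩ := (part1 _).mp h0re
  obtain ⟨c₂, hc2⟩ := (part1 _).mp h0im
  set z : ℂ := (c₁ : ℂ) + (c₂ : ℂ) * Complex.I with hzdef
  have hz : ∀ j, h j = z * (ψ j : ℂ) := by
    intro j
    have e1 : (h j).re = c₁ * ψ j := by
      have := congrFun hc1 j; simpa using this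
    have e2 : (h j).im = c₂ * ψ j := by
      have := congrFun hc2 j; simpa using this
    apply Complex.ext <;>
      simp [hzdef, Complex.add_re, Complex.mul_re, Complex.add_im, Complex.mul_im, e1, e2]
  have hzne : z ≠ 0 := by
    intro hz0
    apply hne; funext j; simp [hz j, hz0]
  have hgψ : Atil *ᵥ (fun k => (z⁻¹ * hhat k).re) = ψ := by
    have hc : Atil.map Complex.ofReal *ᵥ (fun k => z⁻¹ * hhat k) = fun j => ((ψ j : ℝ) : ℂ) := by
      have hsm : (fun k => z⁻¹ * hhat k) = z⁻¹ • hhat := rfl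
      rw [hsm, Matrix.mulVec_smul, h1]
      funext j
      rw [Pi.smul_apply, smul_eq_mul, hz j, ← mul_assoc, inv_mul_cancel₀ hzne, one_mul]
    have h2 := hre (fun k => z⁻¹ * hhat k)
    rw [hc] at h2
    have h3 := h2.symm
    rw [show (fun j => (((ψ j : ℝ) : ℂ)).re) = ψ from funext fun j => by simp] at h3
    exact h3
  set g : Fin n ⊕ Fin m → ℝ := fun k => (z⁻¹ * hhat k).re with hgdef
  have hPψ : P *ᵥ ψ = 0 := by
    apply hPzero
    calc ψ ⬝ᵥ (P *ᵥ ψ) = (P *ᵥ ψ) ⬝ᵥ (Atil *ᵥ g) := by rw [dotProduct_comm, hgψ]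
      _ = (Atilᵀ *ᵥ (P *ᵥ ψ)) ⬝ᵥ g := by rw [aux_dotT']
      _ = 0 := by rw [hAtP, zero_dotProduct]
  have hkg := key g
  rw [hgψ] at hkg
  have hd0 : ψ ⬝ᵥ (P *ᵥ g) = 0 := by
    rw [aux_dotT', hPsym, hPψ, zero_dotProduct]
  rw [hd0, mul_zero, zero_add] at hkg
  have hge1 := aux_dot_self_nonneg ((P *ᵥ g) ∘ Sum.inr)
  have hge2 := hQnonneg (g ∘ Sum.inl)
  have hwg : (P *ᵥ g) ∘ Sum.inr = 0 := dotProduct_self_eq_zero.mp (by linarith)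
  have hAg : Abar *ᵥ g = ψ := by
    have h4 := hAtil_eq g
    rw [hgψ, hwg] at h4
    have h5 : Sum.elim (0 : Fin n → ℝ) (0 : Fin m → ℝ) = 0 := by
      funext j; cases j <;> simp
    rw [h5, sub_zero] at h4
    exact h4.symm
  have hus : us = 0 := by
    funext i
    rw [hAbar, Matrix.fromBlocks_mulVec] at hAg
    have h6 := congrFun hAg (Sum.inr i)
    simpa [hψdef] using h6.symm
  have hMxs : M *ᵥ xs = 0 := by
    have h7 := hA2
    rw [hus, Matrix.mulVec_zero, add_zero] at h7
    exact h7
  exact hxs_ne (aux_obs_kill M (Qmat G α) hA3o xs hQxs hMxs)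
end
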